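/- arXiv:2107.07171 — 2 statements merged into one kernel-verified Lean document; each statement's English description precedes it below -/
import Mathlib

section
/- Let A ∈ ℝ^{m×m} and B ∈ ℝ^{n×n}, and let P(u,v) = Σ_{i=0}^{p} Σ_{j=0}^{q} c_{ij} u^i v^j be a polynomial in two variables. Define P(A,B) = Σ_{i,j} c_{ij} (A^i ⊗ B^j). If {λ_i}_{i=1}^m and {θ_j}_{j=1}^n are the eigenvalues of A and B (over ℂ, with multiplicity), then the eigenvalues of P(A,B) are exactly P(λ_i, θ_j) for i = 1,…,m, j = 1,…,n. -/
open Matrix Kronecker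

open Polynomial


noncomputable section

def finOneSumEquiv (m : ℕ) : Fin 1 ⊕ Fin m ≃ Fin (m + 1) where
  toFun := Sum.elim (fun _ => 0) Fin.succ
  invFun := fun i => Fin.cases (Sum.inl 0) Sum.inr i
  left_inv := by rintro (x | i) <;> simp [Fin.fin_one_eq_zero]
  right_inv := by
    intro i
    induction i using Fin.cases <;> simp

lemma my_triangularize : ∀ (k : ℕ) (A : Matrix (Fin k) (Fin k) ℂ),
    ∃ U : Matrix (Fin k) (Fin k) ℂ, ∃ _ : Invertible U,
      (U * A * ⅟U).BlockTriangular (id : Fin k → Fin k) := by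
  intro k
  induction k with
  | zero => exact fun A => ⟨1, invertibleOne, fun i _ _ => i.elim0⟩
  | succ m ih =>
    intro A
    obtain ⟨μ, hμ⟩ := Module.End.exists_eigenvalue (Matrix.mulVecLin A)
    obtain ⟨v, hv⟩ := hμ.exists_hasEigenvector
    have hAv : A.mulVec v = μ • v := hv.apply_eq_smul
    obtain ⟨j0, hj0⟩ : ∃ j, v j ≠ 0 := Function.ne_iff.mp hv.right
    set σ := Equiv.swap (0 : Fin (m+1)) j0 with hσ
    set V := ((1 : Matrix (Fin (m+1)) (Fin (m+1)) ℂ).updateCol j0 v).submatrix id σ with hVdef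
    have hVdet : IsUnit V.det := by
      have h0 : ((1 : Matrix (Fin (m+1)) (Fin (m+1)) ℂ).updateCol j0 v).det = v j0 := by
        rw [← Matrix.cramer_apply, Matrix.cramer_one]; rfl
      rw [hVdef, Matrix.det_permute' σ _, h0, isUnit_iff_ne_zero]
      rcases Int.units_eq_one_or (Equiv.Perm.sign σ) with h | h <;> simp [h, hj0]
    letI : Invertible V := V.invertibleOfIsUnitDet hVdet
    have hVcol : V.mulVec (Pi.single (0 : Fin (m+1)) 1) = v := by
      funext i
      rw [Matrix.mulVec_single]
      have hs : σ 0 = j0 := Equiv.swap_apply_left _ _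
      rw [hVdef]
      simp only [Pi.smul_apply, Matrix.col_apply, op_smul_eq_mul, Matrix.submatrix_apply, id, hs, Matrix.updateCol_self, mul_one]
    set B := ⅟V * A * V with hBdef
    have hBcol : B.mulVec (Pi.single (0 : Fin (m+1)) 1)
        = μ • ((Pi.single (0 : Fin (m+1)) (1 : ℂ)) : Fin (m+1) → ℂ) := by
      rw [hBdef, ← Matrix.mulVec_mulVec, ← Matrix.mulVec_mulVec, hVcol, hAv,
        Matrix.mulVec_smul, ← hVcol, Matrix.mulVec_mulVec, invOf_mul_self,
        Matrix.one_mulVec]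
    have hB0 : ∀ i : Fin m, B i.succ 0 = 0 := by
      intro i
      have := congrFun hBcol i.succ
      rw [Matrix.mulVec_single] at this
      simpa [Fin.succ_ne_zero] using this
    set D : Matrix (Fin m) (Fin m) ℂ := Matrix.of (fun i j => B i.succ j.succ) with hDdef
    obtain ⟨U', hU'inv, hU'tri⟩ := ih D
    letI := hU'inv
    set e := finOneSumEquiv m with he
    set W' : Matrix (Fin 1 ⊕ Fin m) (Fin 1 ⊕ Fin m) ℂ := fromBlocks 1 0 0 U' with hW'def
    have hW'inv : W' * (fromBlocks 1 0 0 (⅟U')) = 1 := by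
      rw [hW'def, Matrix.fromBlocks_multiply]
      simp [mul_invOf_self, Matrix.fromBlocks_one]
    have hW'inv' : (fromBlocks 1 0 0 (⅟U')) * W' = 1 := by
      rw [hW'def, Matrix.fromBlocks_multiply]
      simp [invOf_mul_self, Matrix.fromBlocks_one]
    letI : Invertible W' := ⟨fromBlocks 1 0 0 (⅟U'), hW'inv', hW'inv⟩
    set W := W'.submatrix e.symm e.symm with hWdef
    letI : Invertible W := by
      refine ⟨(⅟W').submatrix e.symm e.symm, ?_, ?_⟩ <;>
        rw [hWdef, Matrix.submatrix_mul_equiv] <;>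
        simp [invOf_mul_self, mul_invOf_self, Matrix.submatrix_one_equiv]
    letI : Invertible (⅟V) := invertibleInvOf
    letI : Invertible (W * ⅟V) := invertibleMul W (⅟V)
    refine ⟨W * ⅟V, by infer_instance, ?_⟩
    have hinv : ⅟(W * ⅟V) = V * ⅟W := by
      apply invOf_eq_right_inv
      calc W * ⅟V * (V * ⅟W) = W * (⅟V * V) * ⅟W := by simp only [mul_assoc]
        _ = 1 := by rw [invOf_mul_self, mul_one, mul_invOf_self]
    rw [hinv]
    have hBW : W * ⅟V * A * (V * ⅟W) = W * B * ⅟W := by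
      rw [hBdef]; simp only [mul_assoc]
    rw [hBW]
    -- identify the blocks
    set C := B.submatrix e e with hCdef
    have hBC : B = C.submatrix e.symm e.symm := by
      rw [hCdef, Matrix.submatrix_submatrix]
      simp
    have hiW : ⅟W = (⅟W').submatrix e.symm e.symm := by
      apply invOf_eq_right_inv
      rw [hWdef, Matrix.submatrix_mul_equiv, mul_invOf_self, Matrix.submatrix_one_equiv]
    have hiW' : ⅟W' = fromBlocks 1 0 0 (⅟U') := invOf_eq_right_inv hW'inv
    have hWBW : W * B * ⅟W = ((W' * C * ⅟W').submatrix e.symm e.symm) := by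
      rw [hBC, hiW, hWdef, Matrix.submatrix_mul_equiv, Matrix.submatrix_mul_equiv]
    rw [hWBW]
    have h21 : C.toBlocks₂₁ = 0 := by
      funext i j
      simp only [Matrix.toBlocks₂₁, Matrix.of_apply, hCdef, Matrix.submatrix_apply,
        Matrix.zero_apply, he, finOneSumEquiv, Equiv.coe_fn_mk, Sum.elim_inl, Sum.elim_inr]
      exact hB0 i
    have h22 : C.toBlocks₂₂ = D := rfl
    have hC : C = fromBlocks (C.toBlocks₁₁) (C.toBlocks₁₂) 0 D := by
      conv_lhs => rw [← Matrix.fromBlocks_toBlocks C]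
      rw [h21, h22]
    have hmul : W' * C * ⅟W' =
        fromBlocks (C.toBlocks₁₁) (C.toBlocks₁₂ * ⅟U') 0 (U' * D * ⅟U') := by
      rw [hC, hiW', hW'def, Matrix.fromBlocks_multiply, Matrix.fromBlocks_multiply]
      congr 1 <;> simp
    rw [hmul]
    intro i j hij
    simp only [Matrix.submatrix_apply]
    induction i using Fin.cases with
    | zero => exact absurd hij (Fin.not_lt_zero j).elim
    | succ i' =>
      induction j using Fin.cases with
      | zero =>
        have h1 : e.symm i'.succ = Sum.inr i' := by simp [he, finOneSumEquiv]
        have h2 : e.symm 0 = Sum.inl 0 := by simp [he, finOneSumEquiv]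
        rw [h1, h2]
        rfl
      | succ j' =>
        have h1 : e.symm i'.succ = Sum.inr i' := by simp [he, finOneSumEquiv]
        have h2 : e.symm j'.succ = Sum.inr j' := by simp [he, finOneSumEquiv]
        rw [h1, h2]
        exact hU'tri (by simpa using hij)


variable {R : Type*} [CommRing R]

lemma my_charpoly_conj {k : Type*} [Fintype k] [DecidableEq k]
    (U A : Matrix k k R) [Invertible U] :
    (U * A * ⅟U).charpoly = A.charpoly := by
  set V := C.mapMatrix U with hV
  set W := C.mapMatrix (⅟U) with hW
  have hVW : V * W = 1 := by rw [hV, hW, ← _root_.map_mul, mul_invOf_self, _root_.map_one]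
  have hcomm : V * (Matrix.scalar k (X : R[X])) = (Matrix.scalar k (X : R[X])) * V :=
    (Matrix.scalar_commute X (fun r => Commute.all _ _) V).symm
  have h1 : (U * A * ⅟U).charmatrix = V * A.charmatrix * W := by
    rw [charmatrix, charmatrix, mul_sub, sub_mul, _root_.map_mul, _root_.map_mul]
    congr 1
    rw [hcomm, mul_assoc, hVW, mul_one]
  have hdet : V.det * W.det = 1 := by rw [← Matrix.det_mul, hVW, Matrix.det_one]
  unfold Matrix.charpoly
  rw [h1, Matrix.det_mul, Matrix.det_mul]
  calc V.det * A.charmatrix.det * W.det = A.charmatrix.det * (V.det * W.det) := by ring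
    _ = A.charmatrix.det := by rw [hdet, mul_one]

lemma my_conj_pow {k : Type*} [Fintype k] [DecidableEq k]
    (U A : Matrix k k R) [Invertible U] (i : ℕ) :
    (U * A * ⅟U) ^ i = U * A ^ i * ⅟U := by
  induction i with
  | zero => simp
  | succ i ih =>
    rw [pow_succ, ih, pow_succ]
    calc U * A ^ i * ⅟U * (U * A * ⅟U) = U * A ^ i * (⅟U * U) * (A * ⅟U) := by
          simp only [mul_assoc]
      _ = U * (A ^ i * A) * ⅟U := by rw [invOf_mul_self]; simp only [mul_one, mul_assoc]

open Matrix Polynomial Kronecker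

section lemmas

variable {k : Type*} [Fintype k] [DecidableEq k] {R : Type*} [CommRing R]

lemma my_bt_smul {α : Type*} [Preorder α] {b : k → α} (c : R) {M : Matrix k k R}
    (h : M.BlockTriangular b) : (c • M).BlockTriangular b := by
  intro i j hij
  simp [Matrix.smul_apply, h hij]

lemma my_bt_pow {α : Type*} [LinearOrder α] {b : k → α} {M : Matrix k k R}
    (h : M.BlockTriangular b) (i : ℕ) : (M ^ i).BlockTriangular b := by
  induction i with
  | zero => rw [pow_zero]; exact (Matrix.blockTriangular_one : (1 : Matrix k k R).BlockTriangular b)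
  | succ i ih => rw [pow_succ]; exact Matrix.BlockTriangular.mul (b := b) ih h

lemma my_bt_sum {α ι : Type*} [Preorder α] {b : k → α} (s : Finset ι)
    (f : ι → Matrix k k R) (h : ∀ i ∈ s, (f i).BlockTriangular b) :
    (∑ i ∈ s, f i).BlockTriangular b :=
  Finset.sum_induction f (fun M => M.BlockTriangular b)
    (fun _ _ => Matrix.BlockTriangular.add) Matrix.blockTriangular_zero h

lemma my_diag_pow {α : Type*} [LinearOrder α] {b : k → α} (hb : Function.Injective b)
    {M : Matrix k k R} (h : M.BlockTriangular b) (a : k) (i : ℕ) :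
    (M ^ i) a a = (M a a) ^ i := by
  induction i with
  | zero => simp
  | succ i ih =>
    rw [pow_succ, pow_succ, ← ih, Matrix.mul_apply]
    apply Finset.sum_eq_single a
    · intro x _ hx
      rcases lt_or_gt_of_ne (fun hbx => hx (hb hbx)) with hlt | hlt
      · rw [my_bt_pow h i hlt, zero_mul]
      · rw [h hlt, mul_zero]
    · intro hx; exact absurd (Finset.mem_univ a) hx

lemma my_bt_kron {l : Type*} [Fintype l] [DecidableEq l] [LinearOrder k] [LinearOrder l]
    {T : Matrix k k R} {S : Matrix l l R}
    (hT : T.BlockTriangular id) (hS : S.BlockTriangular id) :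
    (T ⊗ₖ S).BlockTriangular (toLex : k × l → Lex (k × l)) := by
  intro p q hlt
  rw [Prod.Lex.lt_iff] at hlt
  rcases hlt with h1 | ⟨h1, h2⟩
  · rw [Matrix.kroneckerMap_apply, hT (by simpa using h1), zero_mul]
  · rw [Matrix.kroneckerMap_apply, hS (by simpa using h2), mul_zero]

lemma my_charpoly_bt_inj {α : Type*} [LinearOrder α] {b : k → α} (hb : Function.Injective b)
    {M : Matrix k k R} (h : M.BlockTriangular b) :
    M.charpoly = ∏ i, (X - C (M i i)) := by
  rw [h.charpoly, Finset.prod_image (fun x _ y _ hxy => hb hxy)]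
  apply Finset.prod_congr rfl
  intro i _
  letI : Unique {a // b a = b i} := ⟨⟨⟨i, rfl⟩⟩, fun j => Subtype.ext (hb j.2)⟩
  rw [Matrix.charpoly, Matrix.det_unique, Matrix.charmatrix_apply_eq]
  rfl

lemma my_roots_prod (r : k → ℂ) :
    (∏ i, (X - C (r i))).roots = Multiset.map r Finset.univ.val := by
  have : (∏ i, (X - C (r i)))
      = (Multiset.map (fun a => X - C a) (Multiset.map r Finset.univ.val)).prod := by
    rw [Multiset.map_map]; rfl
  rw [this, roots_multiset_prod_X_sub_C]

lemma my_multiset_map_prod {α β γ : Type*} (s : Multiset α) (t : Multiset β)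
    (d : α → ℂ) (e : β → ℂ) (f : ℂ → ℂ → γ) :
    Multiset.map (fun p => f (d p.1) (e p.2)) (s ×ˢ t)
      = Multiset.map (fun p => f p.1 p.2) ((s.map d) ×ˢ (t.map e)) := by
  induction s using Multiset.induction with
  | empty => simp
  | cons a s ih =>
    simp only [Multiset.cons_product, Multiset.map_cons, Multiset.map_add, ih,
      Multiset.map_map, Function.comp_def]

end lemmas


/-- If `{λ_i}` and `{θ_j}` are the eigenvalues (with algebraic
multiplicity, over `ℂ`) of `A` and `B`, then the eigenvalues of
`P(A,B) = ∑ᵢⱼ cᵢⱼ (Aⁱ ⊗ Bʲ)` are exactly `P(λ_i, θ_j)`. -/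
theorem stmt_2 (m n p q : ℕ)
    (A : Matrix (Fin m) (Fin m) ℂ) (B : Matrix (Fin n) (Fin n) ℂ)
    (c : Fin (p + 1) → Fin (q + 1) → ℂ)
    (lam : Fin m → ℂ) (th : Fin n → ℂ)
    (hA : A.charpoly.roots = Multiset.map lam Finset.univ.val)
    (hB : B.charpoly.roots = Multiset.map th Finset.univ.val) :
    (∑ i : Fin (p + 1), ∑ j : Fin (q + 1),
        c i j • ((A ^ (i : ℕ)) ⊗ₖ (B ^ (j : ℕ)))).charpoly.roots
      = Multiset.map
          (fun ij : Fin m × Fin n => ∑ i : Fin (p + 1), ∑ j : Fin (q + 1),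
            c i j * lam ij.1 ^ (i : ℕ) * th ij.2 ^ (j : ℕ))
          Finset.univ.val := by
  classical
  obtain ⟨U, hUi, hTA⟩ := my_triangularize m A
  letI := hUi
  obtain ⟨V, hVi, hTB⟩ := my_triangularize n B
  letI := hVi
  set TA := U * A * ⅟U with hTAdef
  set TB := V * B * ⅟V with hTBdef
  set d : Fin m → ℂ := fun i => TA i i with hd
  set e : Fin n → ℂ := fun j => TB j j with he
  have h1 : A.charpoly = ∏ i, (X - C (d i)) := by
    rw [← my_charpoly_conj U A]
    exact my_charpoly_bt_inj Function.injective_id hTA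
  have h2 : B.charpoly = ∏ j, (X - C (e j)) := by
    rw [← my_charpoly_conj V B]
    exact my_charpoly_bt_inj Function.injective_id hTB
  have hdA : Multiset.map d Finset.univ.val = Multiset.map lam Finset.univ.val := by
    rw [← hA, h1, my_roots_prod]
  have heB : Multiset.map e Finset.univ.val = Multiset.map th Finset.univ.val := by
    rw [← hB, h2, my_roots_prod]
  letI : Invertible (U ⊗ₖ V) :=
    ⟨⅟U ⊗ₖ ⅟V,
      by rw [← Matrix.mul_kronecker_mul, invOf_mul_self, invOf_mul_self,
        Matrix.one_kronecker_one],
      by rw [← Matrix.mul_kronecker_mul, mul_invOf_self, mul_invOf_self,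
        Matrix.one_kronecker_one]⟩
  set M := ∑ i : Fin (p+1), ∑ j : Fin (q+1), c i j • ((A ^ (i:ℕ)) ⊗ₖ (B ^ (j:ℕ))) with hM
  set N := ∑ i : Fin (p+1), ∑ j : Fin (q+1), c i j • ((TA ^ (i:ℕ)) ⊗ₖ (TB ^ (j:ℕ))) with hN
  have hconj : (U ⊗ₖ V) * M * ⅟(U ⊗ₖ V) = N := by
    have hk : (⅟(U ⊗ₖ V) : Matrix _ _ ℂ) = ⅟U ⊗ₖ ⅟V := rfl
    rw [hk, hM, hN, Finset.mul_sum, Finset.sum_mul]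
    refine Finset.sum_congr rfl fun i _ => ?_
    rw [Finset.mul_sum, Finset.sum_mul]
    refine Finset.sum_congr rfl fun j _ => ?_
    rw [Matrix.mul_smul, Matrix.smul_mul, ← Matrix.mul_kronecker_mul,
      ← Matrix.mul_kronecker_mul, ← my_conj_pow U A, ← my_conj_pow V B]
  have hcp : M.charpoly = N.charpoly := by rw [← hconj, my_charpoly_conj]
  have hNtri : N.BlockTriangular (toLex : Fin m × Fin n → Lex (Fin m × Fin n)) := by
    apply my_bt_sum
    intro i _
    apply my_bt_sum
    intro j _
    exact my_bt_smul _ (my_bt_kron (my_bt_pow hTA i) (my_bt_pow hTB j))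
  have hNdiag : ∀ pr : Fin m × Fin n,
      N pr pr = ∑ i : Fin (p+1), ∑ j : Fin (q+1),
        c i j * d pr.1 ^ (i:ℕ) * e pr.2 ^ (j:ℕ) := by
    intro pr
    rw [hN, Matrix.sum_apply]
    refine Finset.sum_congr rfl fun i _ => ?_
    rw [Matrix.sum_apply]
    refine Finset.sum_congr rfl fun j _ => ?_
    rw [Matrix.smul_apply, Matrix.kroneckerMap_apply,
      my_diag_pow Function.injective_id hTA, my_diag_pow Function.injective_id hTB]
    simp [smul_eq_mul, mul_assoc, hd, he]
  have hcpN : N.charpoly = ∏ pr : Fin m × Fin n,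
      (X - C (∑ i : Fin (p+1), ∑ j : Fin (q+1),
        c i j * d pr.1 ^ (i:ℕ) * e pr.2 ^ (j:ℕ))) := by
    rw [my_charpoly_bt_inj toLex.injective hNtri]
    exact Finset.prod_congr rfl fun pr _ => by rw [hNdiag pr]
  rw [hcp, hcpN, my_roots_prod]
  have huniv : (Finset.univ.val : Multiset (Fin m × Fin n))
      = (Finset.univ.val : Multiset (Fin m)) ×ˢ (Finset.univ.val : Multiset (Fin n)) := by
    rw [← Finset.univ_product_univ]
    rfl
  rw [huniv,
    my_multiset_map_prod Finset.univ.val Finset.univ.val d e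
      (fun x y => ∑ i : Fin (p+1), ∑ j : Fin (q+1), c i j * x ^ (i:ℕ) * y ^ (j:ℕ)),
    hdA, heB,
    ← my_multiset_map_prod Finset.univ.val Finset.univ.val lam th
      (fun x y => ∑ i : Fin (p+1), ∑ j : Fin (q+1), c i j * x ^ (i:ℕ) * y ^ (j:ℕ))]
end
end

section
/- Let F: ℝ^n → ℝ be L-smooth and μ-strongly convex with minimizer value F*, and 0 < η < 1/L. Suppose the stochastic-gradient step w⁺ = w − η g satisfies E[g] = ∇F(w) and E‖g‖² ≤ σ² + 2μ(F(w) − F*) + 2μς for some σ², ς ≥ 0. Then E[F(w⁺)] − F* ≤ (1 − ημ)(F(w) − F*) + (η²L/2)(σ² + 2μς). -/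
open RealInnerProductSpace MeasureTheory InnerProductSpace

lemma descent_aux (n : ℕ) (F : EuclideanSpace ℝ (Fin n) → ℝ)
    (F' : EuclideanSpace ℝ (Fin n) → EuclideanSpace ℝ (Fin n))
    (hgrad : ∀ w, HasGradientAt F (F' w) w)
    (L : ℝ)
    (hLip : ∀ w u, ‖F' w - F' u‖ ≤ L * ‖w - u‖)
    (w v : EuclideanSpace ℝ (Fin n)) :
    F (w + v) ≤ F w + ⟪F' w, v⟫ + L / 2 * ‖v‖ ^ 2 := by
  set χ : ℝ → ℝ := fun t => F (w + t • v) - t * ⟪F' w, v⟫ - L * t ^ 2 * ‖v‖ ^ 2 / 2 with hχ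
  have hderiv : ∀ t : ℝ, HasDerivAt χ
      (⟪F' (w + t • v), v⟫ - ⟪F' w, v⟫ - L * t * ‖v‖ ^ 2) t := by
    intro t
    have hline : HasDerivAt (fun t : ℝ => w + t • v) v t := by
      simpa using ((hasDerivAt_id t).smul_const v).const_add w
    have hF : HasFDerivAt F (toDual ℝ _ (F' (w + t • v))) (w + t • v) :=
      (hgrad (w + t • v)).hasFDerivAt
    have := hF.comp_hasDerivAt t hline
    simp only [toDual_apply_apply] at this
    have h2 : HasDerivAt (fun t : ℝ => t * ⟪F' w, v⟫ + L * t ^ 2 * ‖v‖ ^ 2 / 2)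
        (⟪F' w, v⟫ + L * t * ‖v‖ ^ 2) t := by
      have := ((hasDerivAt_pow 2 t).const_mul L).mul_const (‖v‖ ^ 2) |>.div_const 2
      have h1 := (hasDerivAt_id t).mul_const (⟪F' w, v⟫ : ℝ)
      have h3 : HasDerivAt (fun t : ℝ => t * ⟪F' w, v⟫ + L * t ^ 2 * ‖v‖ ^ 2 / 2)
          (1 * ⟪F' w, v⟫ + L * ((2 : ℕ) * t ^ (2 - 1)) * ‖v‖ ^ 2 / 2) t := h1.add this
      convert h3 using 1; push_cast; ring
    have h4 : HasDerivAt (fun t => F (w + t • v) - (t * ⟪F' w, v⟫ + L * t ^ 2 * ‖v‖ ^ 2 / 2))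
        (⟪F' (w + t • v), v⟫ - (⟪F' w, v⟫ + L * t * ‖v‖ ^ 2)) t := this.sub h2
    simpa [hχ, sub_sub] using h4
  have key : χ 1 ≤ χ 0 := by
    have : AntitoneOn χ (Set.Icc (0:ℝ) 1) := by
      apply antitoneOn_of_deriv_nonpos (convex_Icc 0 1)
      · exact (fun t _ => (hderiv t).differentiableAt.continuousAt.continuousWithinAt)
      · exact fun t ht => ((hderiv t).differentiableAt.differentiableWithinAt)
      · intro t ht
        rw [interior_Icc] at ht
        rw [(hderiv t).deriv]
        have h1 : ⟪F' (w + t • v), v⟫ - ⟪F' w, v⟫ = ⟪F' (w + t • v) - F' w, v⟫ := by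
          rw [inner_sub_left]
        have h2 : ⟪F' (w + t • v) - F' w, v⟫ ≤ ‖F' (w + t • v) - F' w‖ * ‖v‖ :=
          real_inner_le_norm _ _
        have h3 : ‖F' (w + t • v) - F' w‖ ≤ L * ‖t • v‖ := by
          simpa using hLip (w + t • v) w
        have h4 : ‖t • v‖ = t * ‖v‖ := by
          rw [norm_smul, Real.norm_eq_abs, abs_of_pos ht.1]
        rw [h4] at h3
        nlinarith [norm_nonneg v, mul_le_mul_of_nonneg_right h3 (norm_nonneg v)]
    exact this (by norm_num) (by norm_num) (by norm_num)
  simp only [hχ, one_smul, zero_smul, add_zero] at key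
  nlinarith [key]

/-- one stochastic-gradient step on an `L`-smooth, `μ`-strongly
convex `F` with `0 < η < 1/L`: if `E[g] = ∇F(w)` and
`E‖g‖² ≤ σ² + 2μ(F(w) - F*) + 2μς`, then
`E[F(w - ηg)] - F* ≤ (1 - ημ)(F(w) - F*) + (η²L/2)(σ² + 2μς)`. -/
theorem stmt_14 (n : ℕ) (F : EuclideanSpace ℝ (Fin n) → ℝ)
    (F' : EuclideanSpace ℝ (Fin n) → EuclideanSpace ℝ (Fin n))
    (hgrad : ∀ w, HasGradientAt F (F' w) w)
    (L μ : ℝ) (hL : 0 < L) (hμ : 0 < μ)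
    (hLip : ∀ w u, ‖F' w - F' u‖ ≤ L * ‖w - u‖)
    (hsc : ∀ w u, F u ≥ F w + ⟪F' w, u - w⟫ + μ / 2 * ‖u - w‖ ^ 2)
    (Fstar : ℝ) (hmin : ∀ w, Fstar ≤ F w) (hatt : ∃ w, F w = Fstar)
    (η : ℝ) (hη : 0 < η) (hηL : η < 1 / L)
    (σ2 ς : ℝ) (hσ2 : 0 ≤ σ2) (hς : 0 ≤ ς)
    (Ω : Type*) [MeasureSpace Ω] (P : Measure Ω) [IsProbabilityMeasure P]
    (g : Ω → EuclideanSpace ℝ (Fin n))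
    (hg_int : Integrable g P)
    (hg_sq_int : Integrable (fun ω => ‖g ω‖ ^ 2) P)
    (w : EuclideanSpace ℝ (Fin n))
    (hF_int : Integrable (fun ω => F (w - η • g ω)) P)
    (hmean : ∫ ω, g ω ∂P = F' w)
    (hvar : ∫ ω, ‖g ω‖ ^ 2 ∂P ≤ σ2 + 2 * μ * (F w - Fstar) + 2 * μ * ς) :
    (∫ ω, F (w - η • g ω) ∂P) - Fstar
      ≤ (1 - η * μ) * (F w - Fstar) + η ^ 2 * L / 2 * (σ2 + 2 * μ * ς) := by
  -- pointwise descent inequality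
  have hdesc : ∀ ω, F (w - η • g ω)
      ≤ F w - η * ⟪F' w, g ω⟫ + η ^ 2 * L / 2 * ‖g ω‖ ^ 2 := by
    intro ω
    have := descent_aux n F F' hgrad L hLip w (-(η • g ω))
    rw [sub_eq_add_neg]
    refine this.trans_eq ?_
    rw [inner_neg_right, norm_neg, norm_smul, Real.norm_eq_abs, abs_of_pos hη,
      real_inner_smul_right]
    ring
  -- integrability of the majorant
  have hinner_int : Integrable (fun ω => ⟪F' w, g ω⟫) P := by
    simpa using ((innerSL ℝ (F' w)).integrable_comp hg_int)
  have hmaj_int : Integrable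
      (fun ω => F w - η * ⟪F' w, g ω⟫ + η ^ 2 * L / 2 * ‖g ω‖ ^ 2) P :=
    ((integrable_const (F w)).sub (hinner_int.const_mul η)).add
      (hg_sq_int.const_mul _)
  have hI : (∫ ω, F (w - η • g ω) ∂P)
      ≤ ∫ ω, (F w - η * ⟪F' w, g ω⟫ + η ^ 2 * L / 2 * ‖g ω‖ ^ 2) ∂P :=
    integral_mono hF_int hmaj_int hdesc
  have hB : Integrable (fun _ : Ω => F w) P := integrable_const _
  have hC : Integrable (fun ω => η * ⟪F' w, g ω⟫) P := hinner_int.const_mul η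
  have hA : Integrable (fun ω => F w - η * ⟪F' w, g ω⟫) P := hB.sub hC
  have hIeq : (∫ ω, (F w - η * ⟪F' w, g ω⟫ + η ^ 2 * L / 2 * ‖g ω‖ ^ 2) ∂P)
      = F w - η * ‖F' w‖ ^ 2 + η ^ 2 * L / 2 * (∫ ω, ‖g ω‖ ^ 2 ∂P) := by
    rw [integral_add hA (hg_sq_int.const_mul _), integral_sub hB hC,
      integral_const, integral_const_mul, integral_const_mul, integral_inner hg_int,
      hmean, real_inner_self_eq_norm_sq]
    simp
  -- strong convexity: ‖F' w‖² ≥ 2μ(F w - F*)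
  have hPL : 2 * μ * (F w - Fstar) ≤ ‖F' w‖ ^ 2 := by
    obtain ⟨u, hu⟩ := hatt
    have h := hsc w u
    have h1 : ⟪(F' w), u - w⟫ ≥ -(‖F' w‖ * ‖w - u‖) := by
      have h2 := real_inner_le_norm (F' w) (w - u)
      have : ⟪(F' w), u - w⟫ = -⟪(F' w), w - u⟫ := by
        rw [← inner_neg_right]; congr 1; abel
      rw [this]; linarith [h2]
    have h3 : ‖u - w‖ = ‖w - u‖ := by rw [← norm_neg]; congr 1; abel
    rw [hu, h3] at h
    nlinarith [h, h1, sq_nonneg (μ * ‖w - u‖ - ‖F' w‖), hμ]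
  -- combine
  have hD : 0 ≤ F w - Fstar := by linarith [hmin w]
  have hηL' : η * L ≤ 1 := by
    have := (lt_div_iff₀ hL).mp hηL
    linarith
  have hV : ∫ ω, ‖g ω‖ ^ 2 ∂P ≤ σ2 + 2 * μ * (F w - Fstar) + 2 * μ * ς := hvar
  have hVnn : (0:ℝ) ≤ η ^ 2 * L / 2 := by positivity
  nlinarith [hI, hIeq, mul_le_mul_of_nonneg_left hV hVnn,
    mul_le_mul_of_nonneg_left hPL hη.le, mul_nonneg (mul_nonneg hη.le hμ.le) hD,
    mul_le_mul_of_nonneg_right hηL' (mul_nonneg (mul_nonneg hη.le hμ.le) hD)]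
end
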